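/- Let γ be a nonempty word over the alphabet {L, M, R} and let t ≥ 1 be an integer. If there exists a word δ such that (γγ̄)^t γ (γ̄γ)^t = δδ̄, then |γ| is even and there exists a word λ with γ = λλ̄. -/

import Mathlib

/-- The three-letter alphabet {L, M, R}. -/
inductive Letter : Type
  | L | M | R
deriving DecidableEq, Repr

/-- Complementation on letters: R̄ = L, L̄ = R, M̄ = M. -/
def Letter.bar : Letter → Letter
  | .L => .R
  | .M => .M
  | .R => .L

/-- Complement of a word (letterwise). -/
def comp (w : List Letter) : List Letter := w.map Letter.bar

/-- k-fold concatenation of a word with itself. -/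
def npow (w : List Letter) : ℕ → List Letter
  | 0 => []
  | n + 1 => w ++ npow w n

lemma comp_append (a b : List Letter) : comp (a ++ b) = comp a ++ comp b :=
  List.map_append

lemma comp_comp (w : List Letter) : comp (comp w) = w := by
  simp only [comp, List.map_map]
  have : Letter.bar ∘ Letter.bar = id := by
    funext x; cases x <;> rfl
  rw [this, List.map_id]

lemma comp_length (w : List Letter) : (comp w).length = w.length :=
  List.length_map _

lemma npow_length (w : List Letter) (k : ℕ) : (npow w k).length = k * w.length := by
  induction k with
  | zero => simp [npow]
  | succ n ih => simp [npow, ih]; ring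

lemma comp_npow (w : List Letter) (k : ℕ) : comp (npow w k) = npow (comp w) k := by
  induction k with
  | zero => rfl
  | succ n ih => simp [npow, comp_append, ih]

theorem stmt_12 (γ : List Letter) (hγ : γ ≠ []) (t : ℕ) (ht : 1 ≤ t)
    (h : ∃ δ : List Letter,
      npow (γ ++ comp γ) t ++ γ ++ npow (comp γ ++ γ) t = δ ++ comp δ) :
    Even γ.length ∧ ∃ lam : List Letter, γ = lam ++ comp lam := by
  obtain ⟨δ, hδ⟩ := h
  set n := γ.length with hn
  -- length computation
  have hlen : 4 * (t * n) + n = 2 * δ.length := by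
    have := congrArg List.length hδ
    simp only [List.length_append, npow_length, comp_length, ← hn] at this
    nlinarith [this]
  have hneven : Even n := by
    rcases Nat.even_or_odd n with he | ho
    · exact he
    · exfalso; obtain ⟨j, hj⟩ := ho; omega
  refine ⟨hneven, ?_⟩
  obtain ⟨m, hm⟩ := hneven
  set lam := γ.take m with hlam
  set mu := γ.drop m with hmu
  have hγsplit : γ = lam ++ mu := (List.take_append_drop m γ).symm
  have hlamlen : lam.length = m := by
    rw [hlam, List.length_take]; omega
  have hmulen : mu.length = m := by
    rw [hmu, List.length_drop]; omega
  have hδlen : δ.length = 2 * (t * n) + m := by omega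
  -- rewrite the big equation with γ split in the middle
  have hW : (npow (γ ++ comp γ) t ++ lam) ++ (mu ++ npow (comp γ ++ γ) t)
      = δ ++ comp δ := by
    rw [← hδ, hγsplit]
    simp [List.append_assoc]
  have hlen1 : (npow (γ ++ comp γ) t ++ lam).length = δ.length := by
    simp only [List.length_append, npow_length, comp_length, ← hn, hlamlen, hδlen]
    ring
  obtain ⟨h1, h2⟩ := List.append_inj hW hlen1
  -- compute comp δ
  have h3 : comp δ = npow (comp γ ++ γ) t ++ comp lam := by
    rw [← h1, comp_append, comp_npow, comp_append, comp_comp]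
  rw [h3] at h2
  -- now mu ++ npow (comp γ ++ γ) t = npow (comp γ ++ γ) t ++ comp lam
  -- take the first m letters of both sides
  have hs : t = .succ (t - 1) := by omega
  have e1 : List.take m (mu ++ npow (comp γ ++ γ) t) = mu := by
    rw [← hmulen]; exact List.take_left
  have e2 : List.take m (npow (comp γ ++ γ) t ++ comp lam) = comp lam := by
    have expand : npow (comp γ ++ γ) t ++ comp lam
        = comp lam ++ (comp mu ++ ((lam ++ mu)
            ++ (npow (comp γ ++ γ) (t - 1) ++ comp lam))) := by
      conv_lhs => rw [hs]
      show ((comp γ ++ γ) ++ npow (comp γ ++ γ) (t - 1)) ++ comp lam = _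
      rw [hγsplit]
      simp [comp_append, List.append_assoc]
    rw [expand, show m = (comp lam).length from by rw [comp_length, hlamlen]]
    exact List.take_left
  have h5 : mu = comp lam := by
    have := congrArg (List.take m) h2
    rwa [e1, e2] at this
  exact ⟨lam, by rw [hγsplit, h5]⟩
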